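/- On the flat square 2-torus T² = R²/Z² of area 1, for every point p the integral ∫_{T²} d(p,x) dA equals (1/6)(√2 + ln(1+√2)), and this value is strictly greater than (1/2) · diam(T²) · Area(T²) = √2/4. -/

import Mathlib

open MeasureTheory Metric

/-- The distance on the flat torus `ℝ²/ℤ²`, expressed on the fundamental domain:
`d(p,x) = inf over integer translates m of ‖x - p + m‖` (Euclidean norm). -/
noncomputable def torusDist (p x : EuclideanSpace ℝ (Fin 2)) : ℝ :=
  ⨅ m : Fin 2 → ℤ, ‖x - p + (WithLp.equiv 2 (Fin 2 → ℝ)).symm (fun i => (m i : ℝ))‖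

/-! ### Auxiliary lemmas -/

/-- Distance to the nearest integer. -/
noncomputable def nid (t : ℝ) : ℝ := |t - round t|

lemma nid_le (t : ℝ) (n : ℤ) : nid t ≤ |t - n| := round_le t n

lemma nid_periodic : Function.Periodic nid 1 := by
  intro t
  have h : round (t + (1:ℝ)) = round t + 1 := by
    have := round_add_intCast t 1
    simpa using this
  simp only [nid, h]
  push_cast
  ring_nf

lemma nid_neg (t : ℝ) : nid (-t) = nid t := by
  apply le_antisymm
  · calc nid (-t) ≤ |(-t) - (-round t : ℤ)| := nid_le _ _
      _ = |t - round t| := by push_cast; rw [← abs_neg]; ring_nf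
  · calc nid t ≤ |t - (-round (-t) : ℤ)| := nid_le _ _
      _ = |(-t) - round (-t)| := by push_cast; rw [← abs_neg]; ring_nf

lemma nid_eq_self {t : ℝ} (h0 : 0 ≤ t) (h1 : t ≤ 1 / 2) : nid t = t := by
  apply le_antisymm
  · simpa [h0, abs_of_nonneg] using nid_le t 0
  · rcases le_or_gt (round t) 0 with h | h
    · have : (round t : ℝ) ≤ 0 := by exact_mod_cast h
      calc t ≤ t - round t := by linarith
        _ ≤ |t - round t| := le_abs_self _
    · have : (1 : ℝ) ≤ round t := by exact_mod_cast h
      calc t ≤ (round t : ℝ) - t := by linarith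
        _ ≤ |t - round t| := by rw [abs_sub_comm]; exact le_abs_self _

lemma continuous_nid : Continuous nid := by
  have h : nid = fun t : ℝ => ‖(t : UnitAddCircle)‖ := by
    funext t; rw [UnitAddCircle.norm_eq]; rfl
  rw [h]
  exact continuous_norm.comp continuous_quotient_mk'

attribute [fun_prop] continuous_nid

/-! ### Computing the torus distance -/

lemma norm_comp (v : EuclideanSpace ℝ (Fin 2)) (m : Fin 2 → ℤ) :
    ‖v + (WithLp.equiv 2 (Fin 2 → ℝ)).symm (fun i => (m i : ℝ))‖
      = Real.sqrt ((v 0 + m 0) ^ 2 + (v 1 + m 1) ^ 2) := by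
  rw [EuclideanSpace.norm_eq]
  congr 1
  rw [Fin.sum_univ_two]
  simp [PiLp.add_apply, sq_abs]

lemma torusDist_eq (p x : EuclideanSpace ℝ (Fin 2)) :
    torusDist p x = Real.sqrt (nid (x 0 - p 0) ^ 2 + nid (x 1 - p 1) ^ 2) := by
  have hsub : ∀ i, (x - p) i = x i - p i := fun i => rfl
  apply le_antisymm
  · have h := ciInf_le (f := fun m : Fin 2 → ℤ =>
        ‖x - p + (WithLp.equiv 2 (Fin 2 → ℝ)).symm (fun i => (m i : ℝ))‖)
      (⟨0, by rintro r ⟨m, rfl⟩; exact norm_nonneg _⟩ : BddBelow _)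
      (fun i => -round ((x - p) i))
    refine le_trans h ?_
    rw [norm_comp]
    apply le_of_eq
    congr 1
    have : ∀ i, ((x-p) i + ((-round ((x-p) i) : ℤ) : ℝ)) ^ 2 = nid ((x-p) i) ^ 2 := by
      intro i
      rw [nid, ← sq_abs]
      push_cast
      ring_nf
    simp only [hsub] at this
    show (x 0 - p 0 + ((-round (x 0 - p 0) : ℤ):ℝ)) ^ 2
        + (x 1 - p 1 + ((-round (x 1 - p 1) : ℤ):ℝ)) ^ 2 = _
    rw [this 0, this 1]
  · apply le_ciInf
    intro m
    rw [norm_comp]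
    apply Real.sqrt_le_sqrt
    have key : ∀ i, nid ((x - p) i) ^ 2 ≤ ((x - p) i + m i) ^ 2 := by
      intro i
      have h1 : nid ((x-p) i) ≤ |(x-p) i + m i| := by
        have := nid_le ((x-p) i) (-(m i))
        push_cast at this
        simpa [sub_neg_eq_add] using this
      calc nid ((x-p) i) ^ 2 ≤ |(x-p) i + m i| ^ 2 :=
            pow_le_pow_left₀ (abs_nonneg _) h1 2
          _ = ((x-p) i + m i) ^ 2 := sq_abs _
    have h0 := key 0; have h1 := key 1
    show nid (x 0 - p 0) ^ 2 + nid (x 1 - p 1) ^ 2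
        ≤ (x 0 - p 0 + (m 0:ℝ)) ^ 2 + (x 1 - p 1 + (m 1:ℝ)) ^ 2
    rw [hsub 0] at h0; rw [hsub 1] at h1
    linarith

/-! ### Transfer to `ℝ × ℝ` -/

noncomputable def Gf (a b : ℝ) : ℝ := Real.sqrt (nid a ^ 2 + nid b ^ 2)

lemma step_B (p : EuclideanSpace ℝ (Fin 2)) :
    (∫ x in {x : EuclideanSpace ℝ (Fin 2) | ∀ i, x i ∈ Set.Ico (0:ℝ) 1},
        Real.sqrt (nid (x 0 - p 0) ^ 2 + nid (x 1 - p 1) ^ 2))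
    = ∫ z in Set.Ico (0:ℝ) 1 ×ˢ Set.Ico (0:ℝ) 1, Gf (z.1 - p 0) (z.2 - p 1) := by
  have comp := (volume_preserving_finTwoArrow ℝ).comp
      (EuclideanSpace.volume_preserving_symm_measurableEquiv_toLp (Fin 2))
  have emb := ((MeasurableEquiv.toLp 2 (Fin 2 → ℝ)).symm.trans
      MeasurableEquiv.finTwoArrow).measurableEmbedding
  have key := comp.setIntegral_preimage_emb emb
      (fun z : ℝ × ℝ => Gf (z.1 - p 0) (z.2 - p 1))
      (Set.Ico (0:ℝ) 1 ×ˢ Set.Ico (0:ℝ) 1)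
  rw [← key]
  have hset : (⇑MeasurableEquiv.finTwoArrow ∘ ⇑(MeasurableEquiv.toLp 2 (Fin 2 → ℝ)).symm) ⁻¹'
      (Set.Ico (0:ℝ) 1 ×ˢ Set.Ico (0:ℝ) 1)
      = {x : EuclideanSpace ℝ (Fin 2) | ∀ i, x i ∈ Set.Ico (0:ℝ) 1} := by
    ext x
    simp [MeasurableEquiv.finTwoArrow, Fin.forall_fin_two]
  rw [hset]
  rfl

/-! ### Reduction to an iterated integral over `[0,1/2]²` -/

open intervalIntegral in
/-- Shift invariance for a 1-periodic function. -/
lemma shift_int (f : ℝ → ℝ) (hf : Function.Periodic f 1) (a : ℝ) :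
    ∫ t in (0:ℝ)..1, f (t - a) = ∫ t in (0:ℝ)..1, f t := by
  rw [intervalIntegral.integral_comp_sub_right f a, show (0:ℝ)-a = -a by ring,
    show (1:ℝ)-a = -a+1 by ring]
  simpa using hf.intervalIntegral_add_eq (-a) 0

lemma half_int (h : ℝ → ℝ) (hc : Continuous h) (hper : Function.Periodic h 1)
    (heven : ∀ t, h (-t) = h t) :
    ∫ t in (0:ℝ)..1, h t = 2 * ∫ t in (0:ℝ)..(1/2:ℝ), h t := by
  have h2 : ∀ t : ℝ, h (1 - t) = h t := by
    intro t
    have h3 := hper (-t)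
    rw [heven] at h3
    rw [show (1:ℝ) - t = -t + 1 by ring, h3]
  have h1 : ∫ t in (1/2:ℝ)..1, h t = ∫ t in (0:ℝ)..(1/2:ℝ), h t := by
    have h4 := intervalIntegral.integral_comp_sub_left (a := (0:ℝ)) (b := 1/2) h 1
    rw [show (1:ℝ)-(1/2) = 1/2 by norm_num, show (1:ℝ)-0 = 1 by ring] at h4
    rw [← h4]
    exact intervalIntegral.integral_congr (fun t _ => h2 t)
  rw [← intervalIntegral.integral_add_adjacent_intervals
    (hc.intervalIntegrable 0 (1/2)) (hc.intervalIntegrable (1/2) 1), h1]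
  ring

lemma continuous_Gf : Continuous (fun z : ℝ × ℝ => Gf z.1 z.2) := by
  apply Real.continuous_sqrt.comp
  exact (((continuous_nid.comp continuous_fst).pow 2).add
    ((continuous_nid.comp continuous_snd).pow 2))

lemma Gf_per_left (v : ℝ) : Function.Periodic (fun u => Gf u v) 1 := by
  intro u; simp only [Gf, nid_periodic u]
lemma Gf_per_right (u : ℝ) : Function.Periodic (fun v => Gf u v) 1 := by
  intro v; simp only [Gf, nid_periodic v]
lemma Gf_even_left (u v : ℝ) : Gf (-u) v = Gf u v := by simp only [Gf, nid_neg]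
lemma Gf_even_right (u v : ℝ) : Gf u (-v) = Gf u v := by simp only [Gf, nid_neg]

lemma step_CD (p0 p1 : ℝ) :
    (∫ z in Set.Ico (0:ℝ) 1 ×ˢ Set.Ico (0:ℝ) 1, Gf (z.1 - p0) (z.2 - p1))
    = 4 * ∫ u in (0:ℝ)..(1/2:ℝ), ∫ v in (0:ℝ)..(1/2:ℝ), Real.sqrt (u^2 + v^2) := by
  have hGc : Continuous (fun z : ℝ × ℝ => Gf (z.1 - p0) (z.2 - p1)) := by
    unfold Gf; fun_prop
  have hint : IntegrableOn (fun z : ℝ × ℝ => Gf (z.1 - p0) (z.2 - p1))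
      (Set.Ico (0:ℝ) 1 ×ˢ Set.Ico (0:ℝ) 1) volume := by
    apply (hGc.continuousOn.integrableOn_compact (isCompact_Icc.prod isCompact_Icc)).mono_set
    exact Set.prod_mono Set.Ico_subset_Icc_self Set.Ico_subset_Icc_self
  rw [Measure.volume_eq_prod] at hint ⊢
  rw [setIntegral_prod _ hint]
  have inner : ∀ u : ℝ, (∫ v in Set.Ico (0:ℝ) 1, Gf (u - p0) (v - p1))
      = 2 * ∫ v in (0:ℝ)..(1/2:ℝ), Gf (u - p0) v := by
    intro u
    rw [setIntegral_congr_set Ico_ae_eq_Ioc, ← intervalIntegral.integral_of_le zero_le_one]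
    rw [shift_int _ (Gf_per_right (u - p0)) p1]
    exact half_int _ (by unfold Gf; fun_prop) (Gf_per_right (u - p0))
      (fun t => Gf_even_right _ t)
  simp only [inner]
  rw [MeasureTheory.integral_const_mul]
  rw [setIntegral_congr_set Ico_ae_eq_Ioc, ← intervalIntegral.integral_of_le zero_le_one]
  have houter : Continuous (fun u : ℝ => ∫ v in (0:ℝ)..(1/2:ℝ), Gf u v) := by
    apply intervalIntegral.continuous_parametric_intervalIntegral_of_continuous'
    exact continuous_Gf
  have hper : Function.Periodic (fun u => ∫ v in (0:ℝ)..(1/2:ℝ), Gf u v) 1 := by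
    intro u
    exact intervalIntegral.integral_congr (fun v _ => Gf_per_left v u)
  have heven : ∀ u : ℝ, (∫ v in (0:ℝ)..(1/2:ℝ), Gf (-u) v) = ∫ v in (0:ℝ)..(1/2:ℝ), Gf u v :=
    fun u => intervalIntegral.integral_congr (fun v _ => Gf_even_left u v)
  rw [shift_int _ hper p0]
  rw [half_int _ houter hper heven]
  rw [show (2:ℝ) * (2 * ∫ u in (0:ℝ)..(1/2:ℝ), ∫ v in (0:ℝ)..(1/2:ℝ), Gf u v)
      = 4 * ∫ u in (0:ℝ)..(1/2:ℝ), ∫ v in (0:ℝ)..(1/2:ℝ), Gf u v by ring]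
  congr 1
  apply intervalIntegral.integral_congr
  intro u hu
  rw [Set.uIcc_of_le (by norm_num)] at hu
  apply intervalIntegral.integral_congr
  intro v hv
  rw [Set.uIcc_of_le (by norm_num)] at hv
  simp only [Gf, nid_eq_self hu.1 hu.2, nid_eq_self hv.1 hv.2]

open intervalIntegral

lemma sqrt_aux {u v : ℝ} (hu : 0 < u) : Real.sqrt (1 + (v/u)^2) = Real.sqrt (u^2+v^2) / u := by
  rw [show (1:ℝ) + (v/u)^2 = (u^2+v^2)/u^2 by field_simp,
    Real.sqrt_div (by positivity), Real.sqrt_sq hu.le]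

lemma inner_eval {u : ℝ} (hu : 0 < u) :
    ∫ v in (0:ℝ)..(1/2:ℝ), Real.sqrt (u^2+v^2)
      = (1/2 * Real.sqrt (u^2+1/4) + u^2 * Real.arsinh (1/(2*u)))/2 := by
  have hd : ∀ v : ℝ, HasDerivAt (fun v => (v * Real.sqrt (u^2+v^2)
      + u^2 * Real.arsinh (v/u))/2) (Real.sqrt (u^2+v^2)) v := by
    intro v
    have hpos : (0:ℝ) < u^2 + v^2 := by positivity
    have hs : HasDerivAt (fun v : ℝ => u^2 + v^2) (2*v) v := by
      simpa using ((hasDerivAt_pow 2 v).const_add (u^2))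
    have hsq : HasDerivAt (fun v : ℝ => Real.sqrt (u^2+v^2))
        (1/(2*Real.sqrt (u^2+v^2)) * (2*v)) v :=
      (Real.hasDerivAt_sqrt hpos.ne').comp v hs
    have hdiv : HasDerivAt (fun v : ℝ => v/u) (1/u) v := by
      simpa using (hasDerivAt_id v).div_const u
    have hars : HasDerivAt (fun v : ℝ => Real.arsinh (v/u))
        ((Real.sqrt (1+(v/u)^2))⁻¹ * (1/u)) v :=
      (Real.hasDerivAt_arsinh _).comp v hdiv
    have h1 : HasDerivAt (fun v : ℝ => v * Real.sqrt (u^2+v^2))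
        (1 * Real.sqrt (u^2+v^2) + v * (1/(2*Real.sqrt (u^2+v^2)) * (2*v))) v :=
      (hasDerivAt_id v).mul hsq
    have h2 := (h1.add (hars.const_mul (u^2))).div_const 2
    refine h2.congr_deriv ?_
    symm
    rw [sqrt_aux hu]
    have hsqp : (0:ℝ) < Real.sqrt (u^2+v^2) := Real.sqrt_pos.mpr hpos
    have hss : Real.sqrt (u^2+v^2) ^ 2 = u^2 + v^2 := Real.sq_sqrt hpos.le
    field_simp
    linear_combination (1) * hss
  rw [intervalIntegral.integral_eq_sub_of_hasDerivAt (fun v _ => hd v)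
    (Continuous.intervalIntegrable (by fun_prop) 0 (1/2))]
  rw [show (1/2:ℝ)/u = 1/(2*u) by ring]
  norm_num [Real.arsinh_zero]

noncomputable def Af (u : ℝ) : ℝ :=
  (1/2 * Real.sqrt (u^2+1/4) + u^2 * Real.arsinh (1/(2*u)))/2

lemma inner_eval' {u : ℝ} (hu0 : 0 ≤ u) :
    ∫ v in (0:ℝ)..(1/2:ℝ), Real.sqrt (u^2+v^2) = Af u := by
  rcases hu0.lt_or_eq with h|h
  · exact inner_eval h
  · rw [← h, Af]
    have : ∫ v in (0:ℝ)..(1/2:ℝ), Real.sqrt ((0:ℝ)^2+v^2) = ∫ v in (0:ℝ)..(1/2:ℝ), v := by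
      apply intervalIntegral.integral_congr
      intro v hv
      rw [Set.uIcc_of_le (by norm_num)] at hv
      show Real.sqrt ((0:ℝ)^2+v^2) = v
      rw [show (0:ℝ)^2+v^2 = v^2 by ring, Real.sqrt_sq hv.1]
    rw [this, integral_id,
      show (0:ℝ)^2+1/4 = (1/2)^2 by norm_num, Real.sqrt_sq (by norm_num)]
    norm_num

lemma arsinh_le_inv {u : ℝ} (hu : 0 < u) : Real.arsinh (1/(2*u)) ≤ 1/u := by
  set y := 1/(2*u) with hy
  have hy0 : 0 < y := by positivity
  have h1 : Real.sqrt (1+y^2) ≤ 1 + y := by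
    rw [show (1:ℝ)+y = Real.sqrt ((1+y)^2) from (Real.sqrt_sq (by positivity)).symm]
    exact Real.sqrt_le_sqrt (by nlinarith)
  calc Real.arsinh y ≤ Real.log (1 + 2*y) := by
        rw [Real.arsinh]
        exact Real.log_le_log (by positivity) (by linarith)
    _ ≤ 2*y := by
        have := Real.log_le_sub_one_of_pos (show (0:ℝ) < 1+2*y by positivity)
        linarith
    _ = 1/u := by rw [hy]; field_simp

lemma tendsto_pow_arsinh (n : ℕ) (hn : 1 ≤ n) :
    Filter.Tendsto (fun u : ℝ => u^(n+1) * Real.arsinh (1/(2*u)))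
      (nhdsWithin 0 (Set.Icc 0 (1/2:ℝ))) (nhds 0) := by
  apply squeeze_zero' (g := fun u : ℝ => u^n)
  · filter_upwards [self_mem_nhdsWithin] with u hu
    rcases hu.1.lt_or_eq with h|h
    · exact mul_nonneg (by positivity) (Real.arsinh_nonneg_iff.mpr (by positivity))
    · simp [← h]
  · filter_upwards [self_mem_nhdsWithin] with u hu
    rcases hu.1.lt_or_eq with h|h
    · calc u^(n+1) * Real.arsinh (1/(2*u)) ≤ u^(n+1) * (1/u) :=
          mul_le_mul_of_nonneg_left (arsinh_le_inv h) (by positivity)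
        _ = u^n := by field_simp [h.ne']; ring
    · simp [← h]
  · have : Filter.Tendsto (fun u : ℝ => u^n) (nhds 0) (nhds 0) := by
      have := (continuous_pow n).tendsto (0:ℝ)
      simpa [zero_pow (by omega : n ≠ 0)] using this
    exact this.mono_left nhdsWithin_le_nhds

lemma contOn_pow_arsinh (n : ℕ) (hn : 1 ≤ n) :
    ContinuousOn (fun u : ℝ => u^(n+1) * Real.arsinh (1/(2*u))) (Set.Icc 0 (1/2:ℝ)) := by
  intro x hx
  rcases hx.1.lt_or_eq with h|h
  · apply ContinuousAt.continuousWithinAt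
    apply ContinuousAt.mul (by fun_prop)
    exact Real.continuous_arsinh.continuousAt.comp
      (ContinuousAt.div continuousAt_const (by fun_prop) (by positivity))
  · rw [ContinuousWithinAt, ← h]
    have h0 : ((0:ℝ))^(n+1) * Real.arsinh (1/(2*(0:ℝ))) = 0 := by simp
    rw [h0]
    exact tendsto_pow_arsinh n hn

noncomputable def Phi (u : ℝ) : ℝ :=
  u * Real.sqrt (u^2+1/4)/6 + Real.arsinh (2*u)/48 + u^3 * Real.arsinh (1/(2*u))/6

lemma sqrt_2s {u : ℝ} : Real.sqrt (1+(2*u)^2) = 2 * Real.sqrt (u^2+1/4) := by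
  rw [show (1:ℝ)+(2*u)^2 = 4*(u^2+1/4) by ring, show (4:ℝ)*(u^2+1/4) = 2^2*(u^2+1/4) by norm_num,
    Real.sqrt_mul (by positivity), Real.sqrt_sq (by norm_num)]

lemma sqrt_su {u : ℝ} (hu : 0 < u) :
    Real.sqrt (1+(1/(2*u))^2) = Real.sqrt (u^2+1/4) / u := by
  rw [show (1:ℝ)+(1/(2*u))^2 = (u^2+1/4)/u^2 by field_simp; ring,
    Real.sqrt_div (by positivity), Real.sqrt_sq hu.le]

lemma phi_deriv {u : ℝ} (hu : 0 < u) : HasDerivAt Phi (Af u) u := by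
  have hpos : (0:ℝ) < u^2+1/4 := by positivity
  have hs : HasDerivAt (fun u : ℝ => u^2+1/4) (2*u) u := by
    simpa using ((hasDerivAt_pow 2 u).add_const (1/4:ℝ))
  have hsq : HasDerivAt (fun u : ℝ => Real.sqrt (u^2+1/4))
      (1/(2*Real.sqrt (u^2+1/4)) * (2*u)) u := (Real.hasDerivAt_sqrt hpos.ne').comp u hs
  have h1 : HasDerivAt (fun u : ℝ => u * Real.sqrt (u^2+1/4)/6)
      ((1 * Real.sqrt (u^2+1/4) + u * (1/(2*Real.sqrt (u^2+1/4)) * (2*u)))/6) u :=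
    ((hasDerivAt_id u).mul hsq).div_const 6
  have h2inner : HasDerivAt (fun u : ℝ => 2*u) 2 u := by
    simpa using (hasDerivAt_id u).const_mul 2
  have h2 : HasDerivAt (fun u : ℝ => Real.arsinh (2*u)/48)
      ((Real.sqrt (1+(2*u)^2))⁻¹ * 2 / 48) u :=
    ((Real.hasDerivAt_arsinh _).comp u h2inner).div_const 48
  have hinv : HasDerivAt (fun u : ℝ => 1/(2*u)) (-2/(2*u)^2) u := by
    have h := ((hasDerivAt_id u).const_mul 2).inv (by positivity : 2*(id u) ≠ 0)
    simp only [one_div, id] at h ⊢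
    exact h.congr_deriv (by norm_num)
  have hars3 : HasDerivAt (fun u : ℝ => Real.arsinh (1/(2*u)))
      ((Real.sqrt (1+(1/(2*u))^2))⁻¹ * (-2/(2*u)^2)) u :=
    (Real.hasDerivAt_arsinh _).comp u hinv
  have h3 : HasDerivAt (fun u : ℝ => u^3 * Real.arsinh (1/(2*u))/6)
      ((3*u^2 * Real.arsinh (1/(2*u))
        + u^3 * ((Real.sqrt (1+(1/(2*u))^2))⁻¹ * (-2/(2*u)^2)))/6) u := by
    have := ((hasDerivAt_pow 3 u).mul hars3).div_const 6
    simpa using this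
  have htot := (h1.add h2).add h3
  refine htot.congr_deriv ?_
  symm
  rw [sqrt_2s, sqrt_su hu, Af]
  have hsqp : (0:ℝ) < Real.sqrt (u^2+1/4) := Real.sqrt_pos.mpr hpos
  have hss : Real.sqrt (u^2+1/4) ^ 2 = u^2+1/4 := Real.sq_sqrt hpos.le
  set s := Real.sqrt (u^2+1/4) with hsdef
  field_simp
  linear_combination (96) * hss

lemma contOn_Af : ContinuousOn Af (Set.Icc 0 (1/2:ℝ)) := by
  apply ContinuousOn.div_const
  apply ContinuousOn.add
  · exact (continuous_const.mul ((continuous_pow 2).add continuous_const).sqrt).continuousOn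
  · exact contOn_pow_arsinh 1 le_rfl

lemma contOn_Phi : ContinuousOn Phi (Set.Icc 0 (1/2:ℝ)) := by
  apply ContinuousOn.add
  apply ContinuousOn.add
  · exact ((continuous_id.mul ((continuous_pow 2).add continuous_const).sqrt).div_const 6).continuousOn
  · exact ((Real.continuous_arsinh.comp (continuous_const.mul continuous_id)).div_const 48).continuousOn
  · exact (contOn_pow_arsinh 2 (by norm_num)).div_const 6

lemma outer_eval : ∫ u in (0:ℝ)..(1/2:ℝ), Af u
    = (Real.sqrt 2 + Real.arsinh 1)/24 := by
  have hint : IntervalIntegrable Af MeasureTheory.volume 0 (1/2:ℝ) := by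
    apply ContinuousOn.intervalIntegrable
    rw [Set.uIcc_of_le (by norm_num)]
    exact contOn_Af
  rw [intervalIntegral.integral_eq_sub_of_hasDerivAt_of_le (by norm_num)
    contOn_Phi (fun u hu => phi_deriv hu.1) hint]
  rw [Phi, Phi]
  norm_num
  have h2 : (Real.sqrt 2)⁻¹ = Real.sqrt 2 / 2 := by
    have hm : Real.sqrt 2 * Real.sqrt 2 = 2 := Real.mul_self_sqrt (by norm_num)
    field_simp
    rw [sq, hm]
  rw [h2]; ring

/-! ### Final computation -/

lemma arsinh_one_eq : Real.arsinh 1 = Real.log (1 + Real.sqrt 2) := by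
  rw [Real.arsinh]
  norm_num

lemma total_integral :
    (4:ℝ) * ∫ u in (0:ℝ)..(1/2:ℝ), ∫ v in (0:ℝ)..(1/2:ℝ), Real.sqrt (u^2 + v^2)
      = (1 / 6) * (Real.sqrt 2 + Real.log (1 + Real.sqrt 2)) := by
  have h1 : ∫ u in (0:ℝ)..(1/2:ℝ), ∫ v in (0:ℝ)..(1/2:ℝ), Real.sqrt (u^2 + v^2)
      = ∫ u in (0:ℝ)..(1/2:ℝ), Af u := by
    apply intervalIntegral.integral_congr
    intro u hu
    rw [Set.uIcc_of_le (by norm_num)] at hu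
    exact inner_eval' hu.1
  rw [h1, outer_eval, ← arsinh_one_eq]
  ring

lemma log_gt : Real.sqrt 2 / 2 < Real.log (1 + Real.sqrt 2) := by
  have hs2 : Real.sqrt 2 ^ 2 = 2 := Real.sq_sqrt (by norm_num)
  have hs2' : (1.414:ℝ) < Real.sqrt 2 := by nlinarith [Real.sqrt_nonneg 2]
  have hs2'' : Real.sqrt 2 < 1.415 := by nlinarith [Real.sqrt_nonneg 2]
  rw [Real.lt_log_iff_exp_lt (by positivity)]
  have h4 : Real.exp (Real.sqrt 2/4) < 4/(4-Real.sqrt 2) := by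
    have he := Real.add_one_lt_exp (x := -(Real.sqrt 2/4)) (by
      intro h
      have : Real.sqrt 2 = 0 := by linarith [neg_eq_zero.mp h]
      nlinarith)
    rw [Real.exp_neg] at he
    have hep : (0:ℝ) < Real.exp (Real.sqrt 2/4) := Real.exp_pos _
    have hpos : (0:ℝ) < 1 - Real.sqrt 2/4 := by nlinarith
    have he' : 1 - Real.sqrt 2/4 < (Real.exp (Real.sqrt 2/4))⁻¹ := by linarith
    rw [lt_inv_comm₀ hpos hep] at he'
    calc Real.exp (Real.sqrt 2/4) < (1 - Real.sqrt 2/4)⁻¹ := he'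
      _ = 4/(4-Real.sqrt 2) := by
        rw [inv_eq_one_div, div_eq_div_iff (by nlinarith) (by nlinarith)]
        ring
  have h5 : Real.exp (Real.sqrt 2/2) = Real.exp (Real.sqrt 2/4)^2 := by
    rw [sq, ← Real.exp_add]
    ring_nf
  rw [h5]
  have hb : (0:ℝ) < 4 - Real.sqrt 2 := by nlinarith
  calc Real.exp (Real.sqrt 2/4)^2 < (4/(4-Real.sqrt 2))^2 := by
        apply pow_lt_pow_left₀ h4 (Real.exp_pos _).le
        norm_num
    _ < 1 + Real.sqrt 2 := by
        rw [div_pow, div_lt_iff₀ (by positivity)]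
        nlinarith

theorem integral_torusDist (p : EuclideanSpace ℝ (Fin 2)) :
    (∫ x in {x : EuclideanSpace ℝ (Fin 2) | ∀ i, x i ∈ Set.Ico (0 : ℝ) 1},
        torusDist p x) = (1 / 6) * (Real.sqrt 2 + Real.log (1 + Real.sqrt 2)) ∧
    (1 / 6) * (Real.sqrt 2 + Real.log (1 + Real.sqrt 2)) >
      (1 / 2) * (Real.sqrt 2 / 2) * 1 := by
  constructor
  · simp only [torusDist_eq]
    rw [step_B, step_CD, total_integral]
  · have := log_gt
    nlinarith [Real.sqrt_nonneg 2]
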